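/- For the weight w(v) = e^{-v^2}/\sqrt{\pi} and any real ξ ≠ 0, the limit as λ → -1 from the right (λ real) of ω(λ,ξ) := 1 - ∫_ℝ (1+λ) w(v) / ((1+λ)^2 + (vξ)^2) dv equals 1 - √π/|ξ|. -/

import Mathlib

open MeasureTheory Real Filter

noncomputable def w (v : ℝ) : ℝ := Real.exp (-v ^ 2) / Real.sqrt Real.pi

noncomputable def omg (l ξ : ℝ) : ℝ :=
  1 - ∫ v : ℝ, (1 + l) * w v / ((1 + l) ^ 2 + (v * ξ) ^ 2)

/-- after substitution, the inner integral -/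
noncomputable def gg (ξ ε : ℝ) : ℝ :=
  ∫ u : ℝ, Real.exp (-(ε * u / |ξ|) ^ 2) / (1 + u ^ 2)

lemma cont_aux2 (ξ l : ℝ) :
    Continuous fun u : ℝ => Real.exp (-((1 + l) * u / |ξ|) ^ 2) / (1 + u ^ 2) := by
  simp only [div_eq_mul_inv]
  exact (by fun_prop : Continuous fun u : ℝ =>
      Real.exp (-((1 + l) * u * |ξ|⁻¹) ^ 2)).mul
    ((continuous_const.add (continuous_pow 2)).inv₀ (fun u => by positivity : ∀ u : ℝ, (1:ℝ) + u ^ 2 ≠ 0))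

lemma subst_eq (ξ : ℝ) (hξ : ξ ≠ 0) {ε : ℝ} (hε : 0 < ε) :
    (∫ v : ℝ, ε * Real.exp (-v ^ 2) / (ε ^ 2 + (v * ξ) ^ 2))
      = gg ξ ε / |ξ| := by
  have hξ' : |ξ| ≠ 0 := abs_ne_zero.mpr hξ
  have hc : ε / |ξ| ≠ 0 := div_ne_zero hε.ne' hξ'
  have := MeasureTheory.Measure.integral_comp_mul_left
    (fun v : ℝ => ε * Real.exp (-v ^ 2) / (ε ^ 2 + (v * ξ) ^ 2)) (ε / |ξ|)
  rw [show |(ε / |ξ|)⁻¹| = |ξ| / ε by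
    rw [abs_inv, abs_div, abs_abs, abs_of_pos hε, inv_div]] at this
  have key : ∀ u : ℝ,
      ε * Real.exp (-(ε / |ξ| * u) ^ 2) / (ε ^ 2 + (ε / |ξ| * u * ξ) ^ 2)
        = Real.exp (-(ε * u / |ξ|) ^ 2) / (1 + u ^ 2) / ε := by
    intro u
    have h1 : (ε / |ξ| * u * ξ) ^ 2 = ε ^ 2 * u ^ 2 := by
      rw [mul_pow, mul_pow, div_pow, sq_abs]
      field_simp
    rw [h1, show ε / |ξ| * u = ε * u / |ξ| by ring]
    rw [show ε ^ 2 + ε ^ 2 * u ^ 2 = ε ^ 2 * (1 + u ^ 2) by ring]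
    have h2 : (0:ℝ) < 1 + u ^ 2 := by positivity
    field_simp
  simp_rw [key] at this
  rw [integral_div, smul_eq_mul, div_eq_iff hε.ne'] at this
  rw [eq_div_iff hξ', gg, this]
  field_simp [hε.ne']
  ring
  congr 1; ext v; ring

lemma gg_tendsto (ξ : ℝ) (hξ : ξ ≠ 0) :
    Tendsto (fun l : ℝ => gg ξ (1 + l)) (nhdsWithin (-1) (Set.Ioi (-1)))
      (nhds π) := by
  have h := MeasureTheory.tendsto_integral_filter_of_dominated_convergence
    (μ := (volume : Measure ℝ))
    (F := fun (l : ℝ) (u : ℝ) => Real.exp (-((1 + l) * u / |ξ|) ^ 2) / (1 + u ^ 2))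
    (f := fun u : ℝ => (1 + u ^ 2)⁻¹)
    (bound := fun u : ℝ => (1 + u ^ 2)⁻¹)
    (l := nhdsWithin (-1) (Set.Ioi (-1)))
    (by
      filter_upwards with l
      exact (cont_aux2 ξ l).aestronglyMeasurable)
    (by
      filter_upwards with l
      filter_upwards with u
      have h2 : (0:ℝ) < 1 + u ^ 2 := by positivity
      rw [Real.norm_eq_abs, abs_div, abs_of_pos h2, abs_of_nonneg (Real.exp_pos _).le]
      rw [div_le_iff₀ h2, inv_mul_cancel₀ h2.ne']
      exact Real.exp_le_one_iff.mpr (neg_nonpos.mpr (by positivity))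
      )
    integrable_inv_one_add_sq
    (by
      filter_upwards with u
      have hc : Tendsto (fun l : ℝ => Real.exp (-((1 + l) * u / |ξ|) ^ 2))
          (nhdsWithin (-1) (Set.Ioi (-1))) (nhds 1) := by
        have : Tendsto (fun l : ℝ => Real.exp (-((1 + l) * u / |ξ|) ^ 2)) (nhds (-1))
            (nhds (Real.exp (-((1 + (-1)) * u / |ξ|) ^ 2))) := by
          apply Continuous.tendsto
          simp only [div_eq_mul_inv]
          fun_prop
        simpa using this.mono_left nhdsWithin_le_nhds
      have := hc.div_const (1 + u ^ 2)
      simpa [one_div] using this)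
  rwa [integral_univ_inv_one_add_sq] at h

theorem stmt0 (ξ : ℝ) (hξ : ξ ≠ 0) :
    Tendsto (fun l => omg l ξ) (nhdsWithin (-1) (Set.Ioi (-1)))
      (nhds (1 - Real.sqrt Real.pi / |ξ|)) := by
  have hπ : Real.sqrt π ≠ 0 := by positivity
  have hξ' : |ξ| ≠ 0 := abs_ne_zero.mpr hξ
  have key : ∀ l ∈ Set.Ioi (-1 : ℝ),
      omg l ξ = 1 - gg ξ (1 + l) / |ξ| / Real.sqrt π := by
    intro l hl
    have hε : 0 < 1 + l := by linarith [Set.mem_Ioi.mp hl]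
    unfold omg w
    rw [show (∫ v : ℝ, (1 + l) * (Real.exp (-v ^ 2) / Real.sqrt π) / ((1 + l) ^ 2 + (v * ξ) ^ 2))
        = (∫ v : ℝ, (1 + l) * Real.exp (-v ^ 2) / ((1 + l) ^ 2 + (v * ξ) ^ 2)) / Real.sqrt π by
      rw [← integral_div]; congr 1; ext v; field_simp]
    rw [subst_eq ξ hξ hε]
  have hmain : Tendsto (fun l : ℝ => 1 - gg ξ (1 + l) / |ξ| / Real.sqrt π)
      (nhdsWithin (-1) (Set.Ioi (-1))) (nhds (1 - Real.sqrt π / |ξ|)) := by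
    have := ((gg_tendsto ξ hξ).div_const |ξ|).div_const (Real.sqrt π)
    have h2 : π / |ξ| / Real.sqrt π = Real.sqrt π / |ξ| := by
      rw [div_div, div_eq_div_iff (by positivity) hξ']
      rw [mul_comm |ξ| (Real.sqrt π), ← mul_assoc, Real.mul_self_sqrt Real.pi_pos.le]
    rw [← h2]
    exact (tendsto_const_nhds).sub this
  exact hmain.congr' (by
    filter_upwards [self_mem_nhdsWithin] with l hl
    exact (key l hl).symm)
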